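/- Let S be a finite monoid. Then every almost pure S-act is absolutely pure. -/

import Mathlib

universe u v w

/-- A right `S`-act: a set with an action `A × S → A` with `a·1 = a`, `a·(st) = (a·s)·t`. -/
class RAct (S : Type u) [Monoid S] (A : Type v) where
  act : A → S → A
  act_one : ∀ a : A, act a 1 = a
  act_mul : ∀ (a : A) (s t : S), act a (s * t) = act (act a s) t

infixl:70 " ⊳ " => RAct.act

/-- An `S`-morphism of right `S`-acts. -/
def IsRActHom (S : Type u) [Monoid S] {A : Type v} {B : Type w}
    [RAct S A] [RAct S B] (f : A → B) : Prop :=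
  ∀ (a : A) (s : S), f (a ⊳ s) = f a ⊳ s

/-- The free `S`-act `F_S(X) = X × S`, with `(x,s)·t = (x, st)`. -/
instance freeAct (S : Type u) [Monoid S] (X : Type w) : RAct S (X × S) where
  act p s := (p.1, p.2 * s)
  act_one p := by simp
  act_mul p s t := by simp [mul_assoc]

/-- Disjoint union of two `S`-acts. -/
instance sumAct (S : Type u) [Monoid S] {A : Type v} {B : Type w} [RAct S A] [RAct S B] :
    RAct S (A ⊕ B) where
  act x s := Sum.elim (fun a => Sum.inl (a ⊳ s)) (fun b => Sum.inr (b ⊳ s)) x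
  act_one := by rintro (a | b) <;> simp [RAct.act_one]
  act_mul := by rintro (a | b) s t <;> simp [RAct.act_mul]

/-- Congruence on a right `S`-act. -/
structure IsActCongr (S : Type u) [Monoid S] {A : Type v} [RAct S A]
    (r : A → A → Prop) : Prop where
  refl : ∀ a, r a a
  symm : ∀ {a b}, r a b → r b a
  trans : ∀ {a b c}, r a b → r b c → r a c
  act : ∀ {a b} (s : S), r a b → r (a ⊳ s) (b ⊳ s)

/-- The act congruence generated by a set of pairs `H`. -/
def congGen (S : Type u) [Monoid S] {A : Type v} [RAct S A]
    (H : Set (A × A)) (a b : A) : Prop :=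
  ∀ r : A → A → Prop, IsActCongr S r → (∀ p ∈ H, r p.1 p.2) → r a b

theorem isActCongr_congGen (S : Type u) [Monoid S] {A : Type v} [RAct S A]
    (H : Set (A × A)) : IsActCongr S (congGen S H) where
  refl a := fun _r hr _ => hr.refl a
  symm h := fun r hr hH => hr.symm (h r hr hH)
  trans h1 h2 := fun r hr hH => hr.trans (h1 r hr hH) (h2 r hr hH)
  act s h := fun r hr hH => hr.act s (h r hr hH)

/-- Equations over an `S`-act `A` with variables from `X`:
`xs = yt` (which includes `xs = xt`) or `xs = a`. -/
inductive Eqn (S : Type u) (A : Type v) (X : Type w) where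
  | vv : X → S → X → S → Eqn S A X
  | vc : X → S → A → Eqn S A X

/-- `b : X → C` is a solution of `E` in the act `C`, where `ι : A → C` interprets constants. -/
def IsSolution (S : Type u) [Monoid S] {A : Type v} {X : Type w} {C : Type*}
    [RAct S C] (ι : A → C) (E : Set (Eqn S A X)) (b : X → C) : Prop :=
  (∀ x s y t, Eqn.vv x s y t ∈ E → b x ⊳ s = b y ⊳ t) ∧
  (∀ x s a, Eqn.vc x s a ∈ E → b x ⊳ s = ι a)

/-- A set of equations over `A` is consistent if it has a solution in some act containing `A`. -/
def Consistent (S : Type u) [Monoid S] {A : Type v} {X : Type w} [RAct S A]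
    (E : Set (Eqn S A X)) : Prop :=
  ∃ (B : Type (max u v w)) (_ : RAct S B) (ι : A → B),
    Function.Injective ι ∧ IsRActHom S ι ∧ ∃ b : X → B, IsSolution S ι E b

/-- `A` is `n`-absolutely pure: every finite consistent system of equations over `A`
in at most `n` variables has a solution in `A`. -/
def NPure (S : Type u) [Monoid S] (A : Type v) [RAct S A] (n : ℕ) : Prop :=
  ∀ E : Set (Eqn S A (Fin n)), E.Finite → Consistent S E →
    ∃ c : Fin n → A, IsSolution S id E c

/-- Almost pure: 1-absolutely pure. -/
def AlmostPure (S : Type u) [Monoid S] (A : Type v) [RAct S A] : Prop :=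
  NPure S A 1

/-- Absolutely pure: `n`-absolutely pure for every `n`. -/
def AbsolutelyPure (S : Type u) [Monoid S] (A : Type v) [RAct S A] : Prop :=
  ∀ n : ℕ, NPure S A n

/-- The pairs `H(Σ)` in the free act coming from constant-free equations of `E`. -/
def Hcf (S : Type u) [Monoid S] {A : Type v} {X : Type w}
    (E : Set (Eqn S A X)) : Set ((X × S) × (X × S)) :=
  {p | ∃ x u y v, Eqn.vv x u y v ∈ E ∧ p = ((x, u), (y, v))}

/-- The pairs `H(Σ) ∪ K(Σ)` on the disjoint union `A ⊔ F_S(X)`. -/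
def HK (S : Type u) [Monoid S] {A : Type v} {X : Type w}
    (E : Set (Eqn S A X)) : Set ((A ⊕ X × S) × (A ⊕ X × S)) :=
  {p | (∃ x u y v, Eqn.vv x u y v ∈ E ∧ p = (Sum.inr (x, u), Sum.inr (y, v))) ∨
       (∃ x s a, Eqn.vc x s a ∈ E ∧ p = (Sum.inr (x, s), Sum.inl a))}

/-- Quotient of an act by a generated congruence. -/
instance quotAct (S : Type u) [Monoid S] {A : Type v} [RAct S A] (H : Set (A × A)) :
    RAct S (Quot (congGen S H)) where
  act q s := Quot.map (fun a => a ⊳ s) (fun _a _b h => (isActCongr_congGen S H).act s h) q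
  act_one := by
    rintro ⟨a⟩
    show Quot.mk _ (a ⊳ (1 : S)) = Quot.mk _ a
    rw [RAct.act_one]
  act_mul := by
    rintro ⟨a⟩ s t
    show Quot.mk _ (a ⊳ (s * t)) = Quot.mk _ (a ⊳ s ⊳ t)
    rw [RAct.act_mul]

/-- The canonical extension `A(Σ) = (A ⊔ F_S(X)) / κ_Σ`. -/
abbrev ActExt (S : Type u) [Monoid S] {A : Type v} {X : Type w} [RAct S A]
    (E : Set (Eqn S A X)) : Type (max u v w) :=
  Quot (congGen S (HK S E))

/-- The natural map `ν_Σ : A → A(Σ)`. -/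
def extOfBase (S : Type u) [Monoid S] {A : Type v} {X : Type w} [RAct S A]
    (E : Set (Eqn S A X)) (a : A) : ActExt S E :=
  Quot.mk _ (Sum.inl a)

/-- A finitely generated `S`-act. -/
def IsFG (S : Type u) [Monoid S] (A : Type v) [RAct S A] : Prop :=
  ∃ T : Finset A, ∀ a : A, ∃ t ∈ T, ∃ s : S, a = t ⊳ s

/-- A monogenic (cyclic) `S`-act. -/
def Monogenic (S : Type u) [Monoid S] (C : Type v) [RAct S C] : Prop :=
  ∃ c : C, ∀ y : C, ∃ s : S, y = c ⊳ s

/-- `A` embeds into `C` as an `S`-act. -/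
def ActEmbeds (S : Type u) [Monoid S] (A : Type v) (C : Type w) [RAct S A] [RAct S C] : Prop :=
  ∃ ι : A → C, IsRActHom S ι ∧ Function.Injective ι

/-- A finitely presented `S`-act: isomorphic to `F_S(X)/ρ` with `X` finite and
`ρ` a finitely generated congruence. -/
def IsFP (S : Type u) [Monoid S] (A : Type v) [RAct S A] : Prop :=
  ∃ (n : ℕ) (H : Set ((Fin n × S) × (Fin n × S))), H.Finite ∧
    ∃ φ : Fin n × S → A, IsRActHom S φ ∧ Function.Surjective φ ∧
      ∀ p q : Fin n × S, φ p = φ q ↔ congGen S H p q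

/-- A right coherent monoid. -/
def RightCoherent (S : Type u) [Monoid S] : Prop :=
  ∀ (A B : Type u) (_ : RAct S A) (_ : RAct S B) (ι : B → A),
    IsRActHom S ι → Function.Injective ι → IsFP S A → IsFG S B → IsFP S B

/-- The fem-property: every finitely generated `S`-act embeds into a monogenic act. -/
def FemProperty (S : Type u) [Monoid S] : Prop :=
  ∀ (A : Type u) (_ : RAct S A), IsFG S A → ∃ (C : Type u) (_ : RAct S C),
    Monogenic S C ∧ ActEmbeds S A C

/-- A subact of an `S`-act. -/
structure Subact (S : Type u) [Monoid S] (B : Type v) [RAct S B] where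
  carrier : Set B
  closed : ∀ b ∈ carrier, ∀ s : S, b ⊳ s ∈ carrier

instance subAct (S : Type u) [Monoid S] {B : Type v} [RAct S B] (T : Subact S B) :
    RAct S T.carrier where
  act a s := ⟨a.1 ⊳ s, T.closed a.1 a.2 s⟩
  act_one a := Subtype.ext (RAct.act_one a.1)
  act_mul a s t := Subtype.ext (RAct.act_mul a.1 s t)


def BuiltFrom (S : Type u) [Monoid S] {A B : Type v} [RAct S A] [RAct S B]
    (ι : A → B) (P : ℕ → Prop) : Prop :=
  IsRActHom S ι ∧ Function.Injective ι ∧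
  ∃ (ξ : Ordinal.{v}) (C : Ordinal.{v} → Subact S B),
    (C 0).carrier = Set.range ι ∧
    (∀ i j : Ordinal.{v}, i ≤ j → (C i).carrier ⊆ (C j).carrier) ∧
    (C ξ).carrier = Set.univ ∧
    (∀ ζ : Ordinal.{v}, ζ ≤ ξ → Order.IsSuccLimit ζ → (C ζ).carrier = ⋃ i ∈ Set.Iio ζ, (C i).carrier) ∧
    (∀ i : Ordinal.{v}, i < ξ → ∃ m : ℕ, P m ∧
      (∃ E : Set (Eqn S (↥(C i).carrier) (Fin m)), Consistent S E ∧
        (∃ e : ActExt S E → B, IsRActHom S e ∧ Function.Injective e ∧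
          Set.range e = (C (i + 1)).carrier ∧
          (∀ d : ↥(C i).carrier, e (extOfBase S E d) = d.1))))


section AuxAP

open Classical

variable {S : Type u} [Monoid S] {A : Type v} {B : Type (max u v)} [RAct S A] [RAct S B]

/-- One-point amalgam: `A` glued with the complement of a subact `D` of `B`. -/
abbrev PExtAP (A : Type v) {B : Type (max u v)} (D : Set B) : Type (max u v) :=
  A ⊕ {x : B // x ∉ D}

open Classical in
/-- The act structure on the amalgam, given a retraction `h' : D → A`. -/
noncomputable def pextActAP (h' : B → A) (D : Set B)
    (hDc : ∀ x ∈ D, ∀ s : S, x ⊳ s ∈ D)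
    (hh' : ∀ x ∈ D, ∀ s : S, h' (x ⊳ s) = h' x ⊳ s) : RAct S (PExtAP A D) where
  act p s := Sum.elim (fun a => Sum.inl (a ⊳ s))
    (fun x => if h : x.1 ⊳ s ∈ D then Sum.inl (h' (x.1 ⊳ s))
              else Sum.inr ⟨x.1 ⊳ s, h⟩) p
  act_one p := by
    rcases p with a | x
    · simp [RAct.act_one]
    · have hx1 : x.1 ⊳ (1 : S) = x.1 := RAct.act_one x.1
      simp only [Sum.elim_inr]
      rw [dif_neg (by rw [hx1]; exact x.2)]
      exact congrArg Sum.inr (Subtype.ext hx1)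
  act_mul p s t := by
    rcases p with a | x
    · simp [RAct.act_mul]
    · simp only [Sum.elim_inr]
      by_cases h1 : x.1 ⊳ s ∈ D
      · rw [dif_pos h1]
        have h2 : x.1 ⊳ (s * t) ∈ D := by rw [RAct.act_mul]; exact hDc _ h1 t
        rw [dif_pos h2]
        simp only [Sum.elim_inl]
        refine congrArg Sum.inl ?_
        rw [RAct.act_mul, hh' _ h1 t]
      · rw [dif_neg h1]
        simp only [Sum.elim_inr]
        by_cases h2 : x.1 ⊳ (s * t) ∈ D
        · have h2' : (x.1 ⊳ s) ⊳ t ∈ D := by rw [← RAct.act_mul]; exact h2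
          rw [dif_pos h2, dif_pos h2']
          refine congrArg Sum.inl (congrArg h' ?_)
          exact RAct.act_mul x.1 s t
        · have h2' : ¬ (x.1 ⊳ s) ⊳ t ∈ D := by rw [← RAct.act_mul]; exact h2
          rw [dif_neg h2, dif_neg h2']
          exact congrArg Sum.inr (Subtype.ext (RAct.act_mul x.1 s t))

theorem pextActAP_inr (h' : B → A) (D : Set B)
    (hDc : ∀ x ∈ D, ∀ s : S, x ⊳ s ∈ D)
    (hh' : ∀ x ∈ D, ∀ s : S, h' (x ⊳ s) = h' x ⊳ s) (x : {x : B // x ∉ D}) (s : S) :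
    (pextActAP h' D hDc hh').act (Sum.inr x) s
      = if h : x.1 ⊳ s ∈ D then Sum.inl (h' (x.1 ⊳ s)) else Sum.inr ⟨x.1 ⊳ s, h⟩ := rfl

theorem pextActAP_inr_eq (h' : B → A) (D : Set B)
    (hDc : ∀ x ∈ D, ∀ s : S, x ⊳ s ∈ D)
    (hh' : ∀ x ∈ D, ∀ s : S, h' (x ⊳ s) = h' x ⊳ s) (x y : {x : B // x ∉ D}) (s t : S)
    (hxy : x.1 ⊳ s = y.1 ⊳ t) :
    (pextActAP h' D hDc hh').act (Sum.inr x) s = (pextActAP h' D hDc hh').act (Sum.inr y) t := by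
  rw [pextActAP_inr, pextActAP_inr, hxy]

theorem pextActAP_inr_mem (h' : B → A) (D : Set B)
    (hDc : ∀ x ∈ D, ∀ s : S, x ⊳ s ∈ D)
    (hh' : ∀ x ∈ D, ∀ s : S, h' (x ⊳ s) = h' x ⊳ s) (x : {x : B // x ∉ D}) (s : S)
    (hm : x.1 ⊳ s ∈ D) :
    (pextActAP h' D hDc hh').act (Sum.inr x) s = Sum.inl (h' (x.1 ⊳ s)) := by
  rw [pextActAP_inr, dif_pos hm]

theorem pextActAP_inl (h' : B → A) (D : Set B)
    (hDc : ∀ x ∈ D, ∀ s : S, x ⊳ s ∈ D)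
    (hh' : ∀ x ∈ D, ∀ s : S, h' (x ⊳ s) = h' x ⊳ s) (a : A) (s : S) :
    (pextActAP h' D hDc hh').act (Sum.inl a) s = Sum.inl (a ⊳ s) := rfl

/-- Key lemma: given an embedding `ι : A → B` with `A` almost pure over finite `S`,
for any finite list of elements of `B` there is a map `h : B → A` restricting to a
retraction on the subact generated by `ι(A)` and the list. -/
theorem keyAP [Finite S] (hA : AlmostPure S A) (a0 : A)
    (ι : A → B) (hinj : Function.Injective ι) (hhom : IsRActHom S ι) :
    ∀ l : List B, ∃ h : B → A, (∀ a, h (ι a) = a) ∧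
      ∀ x : B, (x ∈ Set.range ι ∨ ∃ b ∈ l, ∃ s : S, x = b ⊳ s) →
        ∀ s : S, h (x ⊳ s) = h x ⊳ s := by
  classical
  intro l
  induction l with
  | nil =>
    set h0 : B → A := fun x => if hx : ∃ a, ι a = x then hx.choose else a0 with hh0
    have key0 : ∀ a, h0 (ι a) = a := by
      intro a
      simp only [hh0]
      rw [dif_pos (⟨a, rfl⟩ : ∃ a', ι a' = ι a)]
      exact hinj (Exists.choose_spec (⟨a, rfl⟩ : ∃ a', ι a' = ι a))
    refine ⟨h0, key0, ?_⟩
    rintro x (⟨a, rfl⟩ | ⟨b, hb, -⟩)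
    · intro s
      have h1 : ι a ⊳ s = ι (a ⊳ s) := (hhom a s).symm
      rw [h1, key0, key0]
    · exact absurd hb List.not_mem_nil
  | cons b l' ih =>
    obtain ⟨h', hA', hB'⟩ := ih
    set D' : Set B := {x | x ∈ Set.range ι ∨ ∃ b' ∈ l', ∃ s : S, x = b' ⊳ s} with hD'def
    have hD'c : ∀ x ∈ D', ∀ s : S, x ⊳ s ∈ D' := by
      rintro x (⟨a, rfl⟩ | ⟨b', hb', u, rfl⟩) s
      · exact Or.inl ⟨a ⊳ s, hhom a s⟩
      · exact Or.inr ⟨b', hb', u * s, (RAct.act_mul b' u s).symm⟩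
    have hB'' : ∀ x ∈ D', ∀ s : S, h' (x ⊳ s) = h' x ⊳ s := fun x hx s => hB' x hx s
    by_cases hb : b ∈ D'
    · refine ⟨h', hA', ?_⟩
      rintro x (hx | ⟨b'', hmem, u, rfl⟩) s
      · exact hB' x (Or.inl hx) s
      · rcases List.mem_cons.mp hmem with heq | hmem'
        · exact hB'' _ (hD'c b'' (heq ▸ hb) u) s
        · exact hB' _ (Or.inr ⟨b'', hmem', u, rfl⟩) s
    · -- the one-variable system over `A` describing `b`
      set E'' : Set (Eqn S A (Fin 1)) :=
        {e | (∃ s t : S, b ⊳ s = b ⊳ t ∧ e = Eqn.vv 0 s 0 t) ∨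
             (∃ s : S, b ⊳ s ∈ D' ∧ e = Eqn.vc 0 s (h' (b ⊳ s)))} with hE''def
      have hfinE : E''.Finite := by
        refine Set.Finite.subset (Set.Finite.union
          (Set.finite_range (fun p : S × S => Eqn.vv (0 : Fin 1) p.1 0 p.2))
          (Set.finite_range (fun s : S => Eqn.vc (0 : Fin 1) s (h' (b ⊳ s))))) ?_
        rintro e (⟨s, t, -, rfl⟩ | ⟨s, -, rfl⟩)
        · exact Or.inl ⟨(s, t), rfl⟩
        · exact Or.inr ⟨s, rfl⟩
      have hconsE : Consistent S E'' := by
        refine ⟨PExtAP A D', pextActAP h' D' hD'c hB'', Sum.inl, Sum.inl_injective,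
          fun a s => rfl, fun _ => Sum.inr ⟨b, hb⟩, ?_, ?_⟩
        · rintro x s y t (⟨s', t', hst, he⟩ | ⟨s', -, he⟩)
          · simp only [Eqn.vv.injEq] at he
            obtain ⟨-, rfl, -, rfl⟩ := he
            exact pextActAP_inr_eq h' D' hD'c hB'' ⟨b, hb⟩ ⟨b, hb⟩ _ _ hst
          · exact absurd he (by simp)
        · rintro x s a (⟨s', t', -, he⟩ | ⟨s', hmem, he⟩)
          · exact absurd he (by simp)
          · simp only [Eqn.vc.injEq] at he
            obtain ⟨-, rfl, rfl⟩ := he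
            exact pextActAP_inr_mem h' D' hD'c hB'' ⟨b, hb⟩ _ hmem
      obtain ⟨c, hcsol⟩ := hA E'' hfinE hconsE
      set c0 : A := c 0 with hc0
      have hc_vv : ∀ s t : S, b ⊳ s = b ⊳ t → c0 ⊳ s = c0 ⊳ t := fun s t hst =>
        hcsol.1 0 s 0 t (Or.inl ⟨s, t, hst, rfl⟩)
      have hc_vc : ∀ s : S, b ⊳ s ∈ D' → c0 ⊳ s = h' (b ⊳ s) := fun s hP =>
        hcsol.2 0 s (h' (b ⊳ s)) (Or.inr ⟨s, hP, rfl⟩)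
      set h : B → A := fun x =>
        if hx : x ∉ D' ∧ ∃ u : S, b ⊳ u = x then c0 ⊳ hx.2.choose else h' x with hhdef
      have hvalP : ∀ x ∈ D', h x = h' x := by
        intro x hx
        simp only [hhdef]
        exact dif_neg (fun hcon => hcon.1 hx)
      have hval : ∀ u : S, b ⊳ u ∉ D' → h (b ⊳ u) = c0 ⊳ u := by
        intro u hu
        have hx : (b ⊳ u ∉ D') ∧ ∃ u' : S, b ⊳ u' = b ⊳ u := ⟨hu, u, rfl⟩
        simp only [hhdef]
        rw [dif_pos hx]
        exact hc_vv _ u hx.2.choose_spec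
      refine ⟨h, ?_, ?_⟩
      · intro a
        rw [hvalP (ι a) (Or.inl ⟨a, rfl⟩)]
        exact hA' a
      · have main : ∀ x : B, (x ∈ D' ∨ ∃ u : S, x = b ⊳ u) →
            ∀ s : S, h (x ⊳ s) = h x ⊳ s := by
          rintro x hx s
          by_cases hP : x ∈ D'
          · rw [hvalP x hP, hvalP (x ⊳ s) (hD'c x hP s)]
            exact hB'' x hP s
          · obtain ⟨u, rfl⟩ := hx.resolve_left hP
            rw [hval u hP]
            have hxs : (b ⊳ u) ⊳ s = b ⊳ (u * s) := (RAct.act_mul b u s).symm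
            rw [hxs]
            by_cases hPs : b ⊳ (u * s) ∈ D'
            · rw [hvalP _ hPs, ← hc_vc _ hPs, RAct.act_mul]
            · rw [hval _ hPs, RAct.act_mul]
        rintro x (hx | ⟨b'', hmem, u, rfl⟩) s
        · exact main x (Or.inl (Or.inl hx)) s
        · rcases List.mem_cons.mp hmem with rfl | hmem'
          · exact main _ (Or.inr ⟨u, rfl⟩) s
          · exact main _ (Or.inl (Or.inr ⟨b'', hmem', u, rfl⟩)) s

end AuxAP

/-- Over a finite monoid, every almost pure act is absolutely pure. -/
theorem finite_almostPure_absolutelyPure (S : Type u) [Monoid S] [Finite S]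
    (A : Type v) [RAct S A]
    (hA : AlmostPure S A) : AbsolutelyPure S A := by
  classical
  -- first, A is nonempty
  have hne : Nonempty A := by
    have hconsE : Consistent S (∅ : Set (Eqn S A (Fin 1))) := by
      refine ⟨A ⊕ (Fin 1 × S), inferInstance, Sum.inl, Sum.inl_injective,
        fun a s => rfl, fun x => Sum.inr (x, 1), ?_, ?_⟩
      · intro x s y t h
        exact absurd h (Set.notMem_empty _)
      · intro x s a h
        exact absurd h (Set.notMem_empty _)
    obtain ⟨c, -⟩ := hA ∅ Set.finite_empty hconsE
    exact ⟨c 0⟩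
  obtain ⟨a0⟩ := hne
  intro n E hfin hcons
  obtain ⟨B, instB, ι, hinj, hhom, b, hsol⟩ := hcons
  letI := instB
  obtain ⟨h, hA', hB'⟩ := keyAP hA a0 ι hinj hhom ((List.finRange n).map b)
  have hbmem : ∀ i : Fin n, ∀ s : S, h (b i ⊳ s) = h (b i) ⊳ s := by
    intro i s
    refine hB' (b i) (Or.inr ⟨b i, ?_, 1, (RAct.act_one (b i)).symm⟩) s
    exact List.mem_map.mpr ⟨i, List.mem_finRange i, rfl⟩
  refine ⟨fun i => h (b i), ?_, ?_⟩
  · intro x s y t hmem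
    have := hsol.1 x s y t hmem
    calc h (b x) ⊳ s = h (b x ⊳ s) := (hbmem x s).symm
      _ = h (b y ⊳ t) := by rw [this]
      _ = h (b y) ⊳ t := hbmem y t
  · intro x s a hmem
    have := hsol.2 x s a hmem
    calc h (b x) ⊳ s = h (b x ⊳ s) := (hbmem x s).symm
      _ = h (ι a) := by rw [this]
      _ = id a := hA' a
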